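/- A permutation w ∈ S_n satisfies: the longest element w_0 is contained in (S_{J_1} × ⋯ × S_{J_{k+1}})·w (where J_s are the descent blocks of w as above) if and only if each descent block of w in one-line notation is an increasing run of consecutive integers and the blocks are in decreasing order of their value ranges; equivalently, w = w(a) for the composition a of n with S(a) = D(w) (as defined via d_s = Σ_{i≤s} a_i and concatenating (n-d_1+1,...,n), (n-d_2+1,...,n-d_1), ..., (1,...,n-d_k)). -/

import Mathlib

/-- The descent pairs of `w`: pairs of adjacent positions (p, p+1) with w(p) > w(p+1). -/
def desPairs {n : ℕ} (w : Equiv.Perm (Fin n)) : Finset (Fin n × Fin n) :=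
  Finset.univ.filter (fun p : Fin n × Fin n => (p.1 : ℕ) + 1 = (p.2 : ℕ) ∧ w p.2 < w p.1)

/-- The index of the descent block of `w` containing position `p`. -/
def blockIdx {n : ℕ} (w : Equiv.Perm (Fin n)) (p : Fin n) : ℕ :=
  ((desPairs w).filter (fun q => q.1 < p)).card

/-- `v` lies in the Young subgroup S_{J_1} × ⋯ × S_{J_{k+1}} of the descent
blocks of `w`. -/
def isYoung {n : ℕ} (w v : Equiv.Perm (Fin n)) : Prop :=
  ∀ y : Fin n, blockIdx w (w⁻¹ (v y)) = blockIdx w (w⁻¹ y)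

/-- The cut set D(w) ⊆ [n-1] of `w`: the (1-indexed) positions of descents. -/
def descCuts {n : ℕ} (w : Equiv.Perm (Fin n)) : Finset ℕ :=
  (desPairs w).image (fun p => (p.2 : ℕ))

/-- The smallest cut point of `D ∪ {n}` strictly above position `p`. -/
noncomputable def upcut (n : ℕ) (D : Finset ℕ) (p : ℕ) : ℕ :=
  sInf {d : ℕ | (d ∈ D ∨ d = n) ∧ p < d}

/-- The largest cut point of `D ∪ {0}` at most `p`. -/
noncomputable def downcut (D : Finset ℕ) (p : ℕ) : ℕ :=
  sSup {d : ℕ | (d ∈ D ∨ d = 0) ∧ d ≤ p}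

/-- `w` is the permutation `w(a)` associated to the composition with cut set
`D`: 0-indexed, w(p) + d_{s+1} + d_s = n + p for adjacent cuts d_s ≤ p < d_{s+1}. -/
noncomputable def isWa (n : ℕ) (D : Finset ℕ) (w : Equiv.Perm (Fin n)) : Prop :=
  ∀ p : Fin n, (w p : ℕ) + upcut n D (p : ℕ) + downcut D (p : ℕ) = n + (p : ℕ)

namespace St13

variable {n : ℕ}

lemma mem_desPairs {w : Equiv.Perm (Fin n)} {q : Fin n × Fin n} :
    q ∈ desPairs w ↔ (q.1 : ℕ) + 1 = (q.2 : ℕ) ∧ w q.2 < w q.1 := by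
  simp [desPairs]

lemma mem_descCuts_of {w : Equiv.Perm (Fin n)} {t t' : Fin n}
    (h : (t : ℕ) + 1 = (t' : ℕ)) (hd : w t' < w t) : (t' : ℕ) ∈ descCuts w :=
  Finset.mem_image.2 ⟨(t, t'), mem_desPairs.2 ⟨h, hd⟩, rfl⟩

lemma blockIdx_eq_card (w : Equiv.Perm (Fin n)) (p : Fin n) :
    blockIdx w p = ((descCuts w).filter (fun d => d ≤ (p : ℕ))).card := by
  unfold blockIdx descCuts
  rw [Finset.filter_image]
  rw [Finset.card_image_of_injOn]
  · congr 1
    apply Finset.filter_congr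
    intro q hq
    have h := (mem_desPairs.1 hq).1
    simp only [Function.comp, Fin.lt_def]
    omega
  · intro a ha b hb hab
    have ha' := (mem_desPairs.1 (Finset.mem_filter.1 (Finset.mem_coe.1 ha)).1).1
    have hb' := (mem_desPairs.1 (Finset.mem_filter.1 (Finset.mem_coe.1 hb)).1).1
    simp only [Function.comp] at hab
    have h2 : a.2 = b.2 := Fin.ext hab
    have h1 : a.1 = b.1 := Fin.ext (by omega)
    exact Prod.ext h1 h2

lemma blockIdx_eq_iff (w : Equiv.Perm (Fin n)) (p q : Fin n) :
    blockIdx w p = blockIdx w q ↔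
      ∀ c ∈ descCuts w, ((c ≤ (p : ℕ)) ↔ (c ≤ (q : ℕ))) := by
  rw [blockIdx_eq_card, blockIdx_eq_card]
  constructor
  · intro h c hc
    rcases le_total (p : ℕ) (q : ℕ) with hpq | hpq
    · have hsub : (descCuts w).filter (fun d => d ≤ (p : ℕ)) ⊆
          (descCuts w).filter (fun d => d ≤ (q : ℕ)) :=
        Finset.monotone_filter_right _ (fun d _ hd => le_trans hd hpq)
      have heq := Finset.eq_of_subset_of_card_le hsub h.ge
      constructor
      · intro hcp; exact le_trans hcp hpq
      · intro hcq
        have : c ∈ (descCuts w).filter (fun d => d ≤ (q : ℕ)) :=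
          Finset.mem_filter.2 ⟨hc, hcq⟩
        rw [← heq] at this
        exact (Finset.mem_filter.1 this).2
    · have hsub : (descCuts w).filter (fun d => d ≤ (q : ℕ)) ⊆
          (descCuts w).filter (fun d => d ≤ (p : ℕ)) :=
        Finset.monotone_filter_right _ (fun d _ hd => le_trans hd hpq)
      have heq := Finset.eq_of_subset_of_card_le hsub h.le
      constructor
      · intro hcp
        have : c ∈ (descCuts w).filter (fun d => d ≤ (p : ℕ)) :=
          Finset.mem_filter.2 ⟨hc, hcp⟩
        rw [← heq] at this
        exact (Finset.mem_filter.1 this).2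
      · intro hcq; exact le_trans hcq hpq
  · intro h
    congr 1
    exact Finset.filter_congr h

lemma upcut_mem {D : Finset ℕ} {p : ℕ} (hp : p < n) :
    (upcut n D p ∈ D ∨ upcut n D p = n) ∧ p < upcut n D p := by
  have hn : n ∈ {d : ℕ | (d ∈ D ∨ d = n) ∧ p < d} := ⟨Or.inr rfl, hp⟩
  exact Nat.sInf_mem ⟨n, hn⟩

lemma upcut_le {D : Finset ℕ} {p d : ℕ} (hd : d ∈ D ∨ d = n) (hpd : p < d) :
    upcut n D p ≤ d :=
  Nat.sInf_le (by exact ⟨hd, hpd⟩)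

lemma downcut_bdd {D : Finset ℕ} {p : ℕ} :
    BddAbove {d : ℕ | (d ∈ D ∨ d = 0) ∧ d ≤ p} :=
  ⟨p, fun x hx => hx.2⟩

lemma downcut_mem {D : Finset ℕ} {p : ℕ} :
    (downcut D p ∈ D ∨ downcut D p = 0) ∧ downcut D p ≤ p := by
  have h0 : (0 : ℕ) ∈ {d : ℕ | (d ∈ D ∨ d = 0) ∧ d ≤ p} := ⟨Or.inr rfl, Nat.zero_le _⟩
  exact Nat.sSup_mem ⟨0, h0⟩ downcut_bdd

lemma le_downcut {D : Finset ℕ} {p d : ℕ} (hd : d ∈ D ∨ d = 0) (hdp : d ≤ p) :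
    d ≤ downcut D p :=
  le_csSup downcut_bdd (by exact ⟨hd, hdp⟩)

lemma interval (D : Finset ℕ) {p x : ℕ} (hp : p < n)
    (h1 : downcut D p ≤ x) (h2 : x < upcut n D p) :
    downcut D x = downcut D p ∧ upcut n D x = upcut n D p := by
  have hUn : upcut n D p ≤ n := upcut_le (Or.inr rfl) hp
  have hxn : x < n := lt_of_lt_of_le h2 hUn
  have hdp := (downcut_mem (D := D) (p := p))
  have hup := upcut_mem (D := D) hp
  constructor
  · apply le_antisymm
    · rcases (downcut_mem (D := D) (p := x)).1 with hmem | h0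
      · by_cases hle : downcut D x ≤ p
        · exact le_downcut (Or.inl hmem) hle
        · exfalso
          have : upcut n D p ≤ downcut D x := upcut_le (Or.inl hmem) (by omega)
          have := (downcut_mem (D := D) (p := x)).2
          omega
      · omega
    · exact le_downcut hdp.1 h1
  · apply le_antisymm
    · exact upcut_le hup.1 h2
    · have hx := upcut_mem (D := D) hxn
      have hpx : p < upcut n D x := by
        by_contra hcon
        push_neg at hcon
        rcases hx.1 with hmem | hn
        · have : upcut n D x ≤ downcut D p := le_downcut (Or.inl hmem) hcon
          omega
        · omega
      exact upcut_le hx.1 hpx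

lemma iff_of_downcut_eq {D : Finset ℕ} {x y : ℕ} (h : downcut D x = downcut D y)
    {c : ℕ} (hc : c ∈ D) : c ≤ x ↔ c ≤ y := by
  constructor
  · intro hcx
    have h1 : c ≤ downcut D x := le_downcut (Or.inl hc) hcx
    have h2 : downcut D y ≤ y := (downcut_mem).2
    omega
  · intro hcy
    have h1 : c ≤ downcut D y := le_downcut (Or.inl hc) hcy
    have h2 : downcut D x ≤ x := (downcut_mem).2
    omega

lemma mem_interval_of_iff {D : Finset ℕ} {p q : ℕ} (hp : p < n) (hq : q < n)
    (h : ∀ c ∈ D, (c ≤ p ↔ c ≤ q)) :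
    downcut D p ≤ q ∧ q < upcut n D p := by
  constructor
  · rcases (downcut_mem (D := D) (p := p)).1 with hmem | h0
    · exact (h _ hmem).1 (downcut_mem).2
    · omega
  · by_contra hcon
    push_neg at hcon
    rcases (upcut_mem (D := D) hp).1 with hmem | hn
    · have h1 : upcut n D p ≤ p := (h _ hmem).2 hcon
      have h2 := (upcut_mem (D := D) hp).2
      omega
    · omega

lemma mono_run (w : Equiv.Perm (Fin n)) :
    ∀ k (a b : Fin n), (a : ℕ) + k = (b : ℕ) →
      (∀ c ∈ descCuts w, ¬((a : ℕ) < c ∧ c ≤ (b : ℕ))) →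
      (w a : ℕ) + k ≤ (w b : ℕ) := by
  intro k
  induction k with
  | zero =>
    intro a b hab _
    have : a = b := Fin.ext (by omega)
    simp [this]
  | succ k ih =>
    intro a b hab hnc
    have hbn : (b : ℕ) < n := b.isLt
    have hb' : (a : ℕ) + k < n := by omega
    set b' : Fin n := ⟨(a : ℕ) + k, hb'⟩ with hb'def
    have h1 : (w a : ℕ) + k ≤ (w b' : ℕ) :=
      ih a b' rfl (fun c hc hcc => hnc c hc ⟨hcc.1, by simp [hb'def] at hcc; omega⟩)
    have hstep : (b' : ℕ) + 1 = (b : ℕ) := by simp [hb'def]; omega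
    have hnlt : ¬ (w b < w b') := by
      intro hlt
      exact hnc (b : ℕ) (mem_descCuts_of hstep hlt) ⟨by omega, le_refl _⟩
    have hne : w b' ≠ w b := by
      intro h
      have : b' = b := w.injective h
      have := congrArg Fin.val this
      simp [hb'def] at this
      omega
    rw [Fin.lt_def] at hnlt
    have hne' : (w b' : ℕ) ≠ (w b : ℕ) := fun h => hne (Fin.ext h)
    omega

end St13

/-- The longest element `w₀` lies in the coset (S_{J_1} × ⋯ × S_{J_{k+1}})·w of
the Young subgroup of the descent blocks of `w` iff `w = w(a)` for the
composition `a` with S(a) = D(w). -/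
theorem stmt13 (n : ℕ) (w : Equiv.Perm (Fin n)) :
    (∃ v : Equiv.Perm (Fin n), isYoung w v ∧
        ∀ x : Fin n, (((v * w) x : ℕ) + (x : ℕ) + 1 = n))
      ↔ isWa n (descCuts w) w := by
  set D := descCuts w with hDdef
  have key : (∀ x : Fin n, blockIdx w (w⁻¹ x.rev) = blockIdx w x) ↔ isWa n D w := by
    constructor
    · -- C → isWa
      intro hC x
      set d := downcut D (x : ℕ) with hd
      set U := upcut n D (x : ℕ) with hU
      have hdx : d ≤ (x : ℕ) := (St13.downcut_mem).2
      have hxU : (x : ℕ) < U := (St13.upcut_mem x.isLt).2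
      have hUn : U ≤ n := St13.upcut_le (Or.inr rfl) x.isLt
      have hdn : d < n := by omega
      -- bounds from C
      have stepA : ∀ b : Fin n, d ≤ (b : ℕ) → (b : ℕ) < U →
          n - U ≤ (w b : ℕ) ∧ (w b : ℕ) + d + 1 ≤ n := by
        intro b hdb hbU
        have hint := St13.interval D x.isLt (hd ▸ hdb) (hU ▸ hbU)
        have hCb := hC ((w b).rev)
        rw [Fin.rev_rev, Equiv.Perm.inv_def, Equiv.symm_apply_apply] at hCb
        have hiff := (St13.blockIdx_eq_iff w b ((w b).rev)).1 hCb
        have hrev : ((Fin.rev (w b)) : ℕ) = n - ((w b : ℕ) + 1) := Fin.val_rev _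
        have hq := St13.mem_interval_of_iff (D := D) b.isLt ((Fin.rev (w b)).isLt) hiff
        rw [hint.1, hint.2] at hq
        have hwb : (w b : ℕ) < n := (w b).isLt
        rw [hrev] at hq
        omega
      -- no cuts inside the block
      have norun : ∀ (a b : Fin n), d ≤ (a : ℕ) → (b : ℕ) < U →
          ∀ c ∈ D, ¬((a : ℕ) < c ∧ c ≤ (b : ℕ)) := by
        intro a b ha hb c hc hcc
        have h1 : c ≤ downcut D (b : ℕ) := St13.le_downcut (Or.inl hc) hcc.2
        have hDa : d ≤ (b : ℕ) := by omega
        have hint := St13.interval D x.isLt (hd ▸ hDa) (hU ▸ hb)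
        rw [hint.1, ← hd] at h1
        omega
      have hU1n : U - 1 < n := by omega
      set bd : Fin n := ⟨d, hdn⟩ with hbd
      set bU : Fin n := ⟨U - 1, hU1n⟩ with hbU
      have h1 : (w bd : ℕ) + ((x : ℕ) - d) ≤ (w x : ℕ) :=
        St13.mono_run w ((x : ℕ) - d) bd x (by simp [hbd]; omega)
          (norun bd x (by simp [hbd]) hxU)
      have h2 : (w x : ℕ) + (U - 1 - (x : ℕ)) ≤ (w bU : ℕ) :=
        St13.mono_run w (U - 1 - (x : ℕ)) x bU (by simp [hbU]; omega)
          (norun x bU hdx (by simp [hbU]; omega))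
      have hA1 := stepA bd (by simp [hbd]) (by simp [hbd]; omega)
      have hA2 := stepA bU (by simp [hbU]; omega) (by simp [hbU]; omega)
      have hwx : (w x : ℕ) < n := (w x).isLt
      omega
    · -- isWa → C
      intro hwa x
      set d := downcut D (x : ℕ) with hd
      set U := upcut n D (x : ℕ) with hU
      have hdx : d ≤ (x : ℕ) := (St13.downcut_mem).2
      have hxU : (x : ℕ) < U := (St13.upcut_mem x.isLt).2
      have hUn : U ≤ n := St13.upcut_le (Or.inr rfl) x.isLt
      have hx'n : U + d - 1 - (x : ℕ) < n := by omega
      set x' : Fin n := ⟨U + d - 1 - (x : ℕ), hx'n⟩ with hx'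
      have hdx' : d ≤ (x' : ℕ) := by simp [hx']; omega
      have hx'U : (x' : ℕ) < U := by simp [hx']; omega
      have hint := St13.interval D x.isLt (hd ▸ hdx') (hU ▸ hx'U)
      have hwx' := hwa x'
      rw [hint.1, hint.2, ← hd, ← hU] at hwx'
      have hwx'v : (w x' : ℕ) < n := (w x').isLt
      have hval : w x' = x.rev := by
        apply Fin.ext
        rw [Fin.val_rev]
        simp [hx'] at hwx' ⊢
        omega
      rw [← hval, Equiv.Perm.inv_def, Equiv.symm_apply_apply]
      exact (St13.blockIdx_eq_iff w x' x).2
        (fun c hc => St13.iff_of_downcut_eq (hint.1.trans hd.symm.symm ▸ hint.1) hc)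
  constructor
  · rintro ⟨v, hy, hv⟩
    rw [← key]
    intro x
    have hvwx : v (w x) = x.rev := by
      have h := hv x
      rw [Equiv.Perm.mul_apply] at h
      apply Fin.ext
      rw [Fin.val_rev]
      omega
    have h := hy (w x)
    rw [hvwx, Equiv.Perm.inv_def, Equiv.symm_apply_apply] at h
    exact h
  · intro hwa
    refine ⟨Fin.revPerm (n := n) * w⁻¹, ?_, ?_⟩
    · intro y
      have : (Fin.revPerm (n := n) * w⁻¹) y = (w⁻¹ y).rev := rfl
      rw [this]
      exact key.2 hwa (w⁻¹ y)
    · intro x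
      have : (Fin.revPerm (n := n) * w⁻¹ * w) x = x.rev := by
        simp [Equiv.Perm.mul_apply]
      rw [this, Fin.val_rev]
      omega
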